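/- Let 𝔸, 𝔹 be real with (𝔸,𝔹) ≠ (0,0), and let Ψ denote any one of the spinors Ψ^(x)(𝔸,𝔹) = (1+𝔸−i𝔹, 1, −1, −1+𝔸+i𝔹)ᵀ, Ψ^(y)(𝔸,𝔹) = (1+i𝔸+𝔹, i, −1, −i+𝔸+i𝔹)ᵀ, Ψ^(z)(𝔸,𝔹) = (1, 0, −1, 𝔸+i𝔹)ᵀ, with A the corresponding index 1, 2, 3. Then for every pair (Λ, L) satisfying the spinor consistency relations, setting Σ̄^A = L Σ^A L⁻¹, one has Σ̄^A (LΨ) ≠ LΨ. That is, no Lorentz-transformed Minkowski tetrad in the post-wave region makes the spinor an eigenvector of the corresponding stationary spin operator with eigenvalue 1: the gravitational wave pulse depolarizes the Dirac particle. -/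
import Mathlib


open Matrix Complex

noncomputable section

/-- The chiral-representation gamma matrices. -/
def γ : Fin 4 → Matrix (Fin 4) (Fin 4) ℂ
  | 0 => !![0, 0, -1, 0; 0, 0, 0, -1; -1, 0, 0, 0; 0, -1, 0, 0]
  | 1 => !![0, 0, 0, 1; 0, 0, 1, 0; 0, -1, 0, 0; -1, 0, 0, 0]
  | 2 => !![0, 0, 0, -I; 0, 0, I, 0; 0, I, 0, 0; -I, 0, 0, 0]
  | 3 => !![0, 0, 1, 0; 0, 0, 0, -1; -1, 0, 0, 0; 0, 1, 0, 0]

/-- γ⁵ = i γ⁰γ¹γ²γ³. -/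
def γ5 : Matrix (Fin 4) (Fin 4) ℂ := I • (γ 0 * γ 1 * γ 2 * γ 3)

/-- The spin operators Σ^A = γ⁵γ⁰γ^A. -/
def SpinOp (A : Fin 4) : Matrix (Fin 4) (Fin 4) ℂ := γ5 * γ 0 * γ A

/-- The Minkowski metric matrix η = diag(1,-1,-1,-1). -/
def η : Matrix (Fin 4) (Fin 4) ℝ := !![1,0,0,0; 0,-1,0,0; 0,0,-1,0; 0,0,0,-1]

/-- A pair (Λ, L) satisfies the spinor consistency relations:
Λ is a Lorentz transformation, L is invertible,
L⁻¹ γ^A L = Σ_B Λ^A_B γ^B for each A, and γ⁰ L† γ⁰ = L⁻¹. -/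
def SpinorConsistent (Λ : Matrix (Fin 4) (Fin 4) ℝ) (L : Matrix (Fin 4) (Fin 4) ℂ) : Prop :=
  Λᵀ * η * Λ = η ∧ IsUnit L.det ∧
  (∀ A : Fin 4, L⁻¹ * γ A * L = ∑ B : Fin 4, (Λ A B : ℂ) • γ B) ∧
  γ 0 * Lᴴ * γ 0 = L⁻¹

lemma gamma_prod_eq : γ 0 * γ 1 * γ 2 * γ 3 =
    !![-I,0,0,0; 0,-I,0,0; 0,0,I,0; 0,0,0,I] := by
  show (!![0, 0, -1, 0; 0, 0, 0, -1; -1, 0, 0, 0; 0, -1, 0, 0] *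
    !![0, 0, 0, 1; 0, 0, 1, 0; 0, -1, 0, 0; -1, 0, 0, 0] *
    !![0, 0, 0, -I; 0, 0, I, 0; 0, I, 0, 0; -I, 0, 0, 0] *
    !![0, 0, 1, 0; 0, 0, 0, -1; -1, 0, 0, 0; 0, 1, 0, 0] : Matrix (Fin 4) (Fin 4) ℂ) = _
  ext i j
  fin_cases i <;> fin_cases j <;> simp [Matrix.mul_apply, Fin.sum_univ_four] <;> rfl

lemma γ5_eq : γ5 = !![1,0,0,0; 0,1,0,0; 0,0,-1,0; 0,0,0,-1] := by
  rw [γ5, gamma_prod_eq]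
  ext i j
  fin_cases i <;> fin_cases j <;> simp [Matrix.smul_apply, Matrix.vecHead, Matrix.vecTail]

lemma SpinOp1_eq : SpinOp 1 = !![0,1,0,0; 1,0,0,0; 0,0,0,1; 0,0,1,0] := by
  rw [SpinOp, γ5_eq]
  show (!![1,0,0,0; 0,1,0,0; 0,0,-1,0; 0,0,0,-1] *
    !![0, 0, -1, 0; 0, 0, 0, -1; -1, 0, 0, 0; 0, -1, 0, 0] *
    !![0, 0, 0, 1; 0, 0, 1, 0; 0, -1, 0, 0; -1, 0, 0, 0] : Matrix (Fin 4) (Fin 4) ℂ) = _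
  ext i j
  fin_cases i <;> fin_cases j <;> simp [Matrix.mul_apply, Fin.sum_univ_four] <;> rfl

lemma SpinOp2_eq : SpinOp 2 = !![0,-I,0,0; I,0,0,0; 0,0,0,-I; 0,0,I,0] := by
  rw [SpinOp, γ5_eq]
  show (!![1,0,0,0; 0,1,0,0; 0,0,-1,0; 0,0,0,-1] *
    !![0, 0, -1, 0; 0, 0, 0, -1; -1, 0, 0, 0; 0, -1, 0, 0] *
    !![0, 0, 0, -I; 0, 0, I, 0; 0, I, 0, 0; -I, 0, 0, 0] : Matrix (Fin 4) (Fin 4) ℂ) = _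
  ext i j
  fin_cases i <;> fin_cases j <;> simp [Matrix.mul_apply, Fin.sum_univ_four] <;> rfl

lemma SpinOp3_eq : SpinOp 3 = !![1,0,0,0; 0,-1,0,0; 0,0,1,0; 0,0,0,-1] := by
  rw [SpinOp, γ5_eq]
  show (!![1,0,0,0; 0,1,0,0; 0,0,-1,0; 0,0,0,-1] *
    !![0, 0, -1, 0; 0, 0, 0, -1; -1, 0, 0, 0; 0, -1, 0, 0] *
    !![0, 0, 1, 0; 0, 0, 0, -1; -1, 0, 0, 0; 0, 1, 0, 0] : Matrix (Fin 4) (Fin 4) ℂ) = _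
  ext i j
  fin_cases i <;> fin_cases j <;> simp [Matrix.mul_apply, Fin.sum_univ_four] <;> rfl

lemma conj_fix {L S : Matrix (Fin 4) (Fin 4) ℂ} (hdet : IsUnit L.det) {v : Fin 4 → ℂ}
    (h : (L * S * L⁻¹).mulVec (L.mulVec v) = L.mulVec v) : S.mulVec v = v := by
  have hinv : L⁻¹ * L = 1 := Matrix.nonsing_inv_mul L hdet
  have h2 := congrArg (fun w => L⁻¹.mulVec w) h
  simp only [Matrix.mulVec_mulVec] at h2
  rw [hinv, Matrix.one_mulVec] at h2
  have e : L⁻¹ * (L * S * L⁻¹ * L) = S := by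
    simp only [Matrix.mul_assoc]
    rw [hinv, Matrix.mul_one, ← Matrix.mul_assoc, hinv, Matrix.one_mul]
  rwa [e] at h2

/-- Depolarization by a gravitational wave pulse: for (𝔸,𝔹) ≠ (0,0), for every
pair (Λ, L) satisfying the spinor consistency relations, with Σ̄^A = L Σ^A L⁻¹,
none of the post-wave laboratory spinors Ψ^(x), Ψ^(y), Ψ^(z) (with the
corresponding index A = 1, 2, 3) satisfies Σ̄^A (LΨ) = LΨ. -/
theorem wave_depolarizes (A B : ℝ) (hAB : (A, B) ≠ ((0 : ℝ), (0 : ℝ)))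
    (Λ : Matrix (Fin 4) (Fin 4) ℝ) (L : Matrix (Fin 4) (Fin 4) ℂ)
    (h : SpinorConsistent Λ L) :
    (let Ψx : Fin 4 → ℂ := ![1 + (A : ℂ) - I * (B : ℂ), 1, -1, -1 + (A : ℂ) + I * (B : ℂ)]
    let Ψy : Fin 4 → ℂ := ![1 + I * (A : ℂ) + (B : ℂ), I, -1, -I + (A : ℂ) + I * (B : ℂ)]
    let Ψz : Fin 4 → ℂ := ![1, 0, -1, (A : ℂ) + I * (B : ℂ)]
    ((L * SpinOp 1 * L⁻¹).mulVec (L.mulVec Ψx) ≠ L.mulVec Ψx) ∧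
    ((L * SpinOp 2 * L⁻¹).mulVec (L.mulVec Ψy) ≠ L.mulVec Ψy) ∧
    ((L * SpinOp 3 * L⁻¹).mulVec (L.mulVec Ψz) ≠ L.mulVec Ψz)) := by
  obtain ⟨-, hdet, -, -⟩ := h
  have hab : ¬ (A = 0 ∧ B = 0) := by
    intro ⟨h1, h2⟩; exact hAB (by rw [h1, h2])
  intro Ψx Ψy Ψz
  refine ⟨?_, ?_, ?_⟩ <;> intro heq
  · have key := conj_fix hdet heq
    have c0 := congrFun key 0
    rw [SpinOp1_eq] at c0
    simp only [Ψx, Matrix.mulVec, dotProduct, Fin.sum_univ_four] at c0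
    simp [Complex.ext_iff, Matrix.vecHead, Matrix.vecTail] at c0
    refine hab ⟨?_, ?_⟩ <;> linarith [c0.1, c0.2]
  · have key := conj_fix hdet heq
    have c0 := congrFun key 0
    rw [SpinOp2_eq] at c0
    simp only [Ψy, Matrix.mulVec, dotProduct, Fin.sum_univ_four] at c0
    simp [Complex.ext_iff, Matrix.vecHead, Matrix.vecTail] at c0
    refine hab ⟨?_, ?_⟩ <;> linarith [c0.1, c0.2]
  · have key := conj_fix hdet heq
    have c3 := congrFun key 3
    rw [SpinOp3_eq] at c3
    simp only [Ψz, Matrix.mulVec, dotProduct, Fin.sum_univ_four] at c3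
    simp [Complex.ext_iff, Matrix.vecHead, Matrix.vecTail] at c3
    refine hab ⟨?_, ?_⟩ <;> linarith [c3.1, c3.2]
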